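/- Let K ≥ 2, let F ∈ 𝓕_K^in, and suppose there exist a column index k₀ and a real number δ with 0 < δ < 1/2 such that δ ≤ F_{s,k₀} ≤ 1−δ for all rows s. Then for every Q ∈ 𝓠_K there exist Q² ∈ 𝓠_K with Q² ∉ 𝓠_K^an and F² ∈ 𝓕_K^in such that FQ = F²Q², (F,Q) is not equivalent to (F²,Q²), and moreover the set of indices k such that e_k is a column of Q² equals the set of indices k such that e_k is a column of Q with k₀ removed. -/

import Mathlib

open Matrix BigOperators

/-- `F ∈ 𝓕_K`: real `M × K` matrix with entries in `[0,1]`. -/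
def memF {M K : ℕ} (F : Matrix (Fin M) (Fin K) ℝ) : Prop :=
  ∀ s k, 0 ≤ F s k ∧ F s k ≤ 1

/-- `Q ∈ 𝓠_K`: real `K × N` matrix with nonnegative entries whose columns sum to 1. -/
def memQ {K N : ℕ} (Q : Matrix (Fin K) (Fin N) ℝ) : Prop :=
  (∀ k i, 0 ≤ Q k i) ∧ ∀ i, ∑ k, Q k i = 1

/-- The standard basis vector `e_k` occurs as a column of `Q`. -/
def isColE {K N : ℕ} (Q : Matrix (Fin K) (Fin N) ℝ) (k : Fin K) : Prop :=
  ∃ i, ∀ l, Q l i = if l = k then (1 : ℝ) else 0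

/-- `Q ∈ 𝓠_K^an`: anchor condition on `Q`. -/
def memQan {K N : ℕ} (Q : Matrix (Fin K) (Fin N) ℝ) : Prop :=
  memQ Q ∧ ∀ k, isColE Q k

/-- The `K-1` column differences `F_{⋆1}−F_{⋆K}, …, F_{⋆(K−1)}−F_{⋆K}` are
linearly independent (stated for every proof of `0 < K`). -/
def colDiffIndep {M K : ℕ} (F : Matrix (Fin M) (Fin K) ℝ) : Prop :=
  ∀ hK : 0 < K, LinearIndependent ℝ (fun j : Fin (K - 1) =>
    (fun s => F s (Fin.castLE (Nat.sub_le K 1) j) - F s ⟨K - 1, Nat.sub_lt hK Nat.one_pos⟩ :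
      Fin M → ℝ))

/-- `F ∈ 𝓕_K^in`. -/
def memFin {M K : ℕ} (F : Matrix (Fin M) (Fin K) ℝ) : Prop :=
  memF F ∧ colDiffIndep F

/-- `F ∈ 𝓕_K^an`: anchor condition on `F`. -/
def memFan {M K : ℕ} (F : Matrix (Fin M) (Fin K) ℝ) : Prop :=
  memF F ∧ ∀ k, ∃ s, 0 < F s k ∧ ∀ l, l ≠ k → F s l = 0

/-- `Q ∈ 𝓠_K^in`: the rows of `Q` are linearly independent. -/
def memQin {K N : ℕ} (Q : Matrix (Fin K) (Fin N) ℝ) : Prop :=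
  memQ Q ∧ LinearIndependent ℝ (fun k : Fin K => Q k)

/-- `F ∈ 𝓕_K^d`: the columns of `F` are mutually distinct. -/
def memFd {M K : ℕ} (F : Matrix (Fin M) (Fin K) ℝ) : Prop :=
  memF F ∧ ∀ k l : Fin K, (∀ s, F s k = F s l) → k = l

/-- `Q ∈ 𝓠_K^ua`: every column of `Q` is a standard basis vector, and every
standard basis vector occurs as a column. -/
def memQua {K N : ℕ} (Q : Matrix (Fin K) (Fin N) ℝ) : Prop :=
  memQ Q ∧ (∀ i, ∃ k, ∀ l, Q l i = if l = k then (1 : ℝ) else 0) ∧ ∀ k, isColE Q k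

/-- `(F¹,Q¹) ∼ (F²,Q²)`: there is a bijection (permutation) `π` with
`F²_{⋆k} = F¹_{⋆π(k)}` and `Q²_{k⋆} = Q¹_{π(k)⋆}` for every `k`. -/
def MEquiv {M N K₁ K₂ : ℕ} (F1 : Matrix (Fin M) (Fin K₁) ℝ) (Q1 : Matrix (Fin K₁) (Fin N) ℝ)
    (F2 : Matrix (Fin M) (Fin K₂) ℝ) (Q2 : Matrix (Fin K₂) (Fin N) ℝ) : Prop :=
  ∃ π : Fin K₂ → Fin K₁, Function.Bijective π ∧
    (∀ k s, F2 s k = F1 s (π k)) ∧ (∀ k i, Q2 k i = Q1 (π k) i)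

/-- `co(F)`: convex hull of the columns of `F` in `ℝ^M`. -/
def coCols {M K : ℕ} (F : Matrix (Fin M) (Fin K) ℝ) : Set (Fin M → ℝ) :=
  convexHull ℝ {v | ∃ k, v = fun s => F s k}

/-- `cone(Q)`: all nonnegative linear combinations of the rows of `Q` in `ℝ^N`. -/
def coneRows {K N : ℕ} (Q : Matrix (Fin K) (Fin N) ℝ) : Set (Fin N → ℝ) :=
  {x | ∃ c : Fin K → ℝ, (∀ k, 0 ≤ c k) ∧ x = ∑ k, c k • Q k}

/-- A model is identifiable if equality of the products implies equivalence. -/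
def Identifiable {M N : ℕ}
    (𝓜 : ∀ K : ℕ, Set (Matrix (Fin M) (Fin K) ℝ × Matrix (Fin K) (Fin N) ℝ)) : Prop :=
  ∀ (K₁ K₂ : ℕ) (F1 : Matrix (Fin M) (Fin K₁) ℝ) (Q1 : Matrix (Fin K₁) (Fin N) ℝ)
    (F2 : Matrix (Fin M) (Fin K₂) ℝ) (Q2 : Matrix (Fin K₂) (Fin N) ℝ),
    (F1, Q1) ∈ 𝓜 K₁ → (F2, Q2) ∈ 𝓜 K₂ → F1 * Q1 = F2 * Q2 → MEquiv F1 Q1 F2 Q2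

/-- The set of indices `k` such that some row of `F` equals `δ_k · e_kᵀ` with `δ_k > 0`. -/
def anchorRows {M K : ℕ} (F : Matrix (Fin M) (Fin K) ℝ) : Set (Fin K) :=
  {k | ∃ (s : Fin M) (d : ℝ), 0 < d ∧ ∀ l, F s l = if l = k then d else 0}

set_option maxHeartbeats 2000000 in
/-- if `F ∈ 𝓕_K^in` has a column `k₀` with entries in `[δ, 1−δ]`,
then for every `Q ∈ 𝓠_K` there are `Q² ∈ 𝓠_K ∖ 𝓠_K^an` and `F² ∈ 𝓕_K^in` with
`FQ = F²Q²`, `(F,Q) ≁ (F²,Q²)`, and the anchor columns of `Q²` are those of `Q` minus `k₀`. -/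
theorem stmt2 {M N K : ℕ} (hM : 1 ≤ M) (hN : 1 ≤ N) (hK : 2 ≤ K)
    (F : Matrix (Fin M) (Fin K) ℝ) (hF : memFin F)
    (k₀ : Fin K) (δ : ℝ) (hδ0 : 0 < δ) (hδh : δ < 1 / 2)
    (hFk₀ : ∀ s, δ ≤ F s k₀ ∧ F s k₀ ≤ 1 - δ) :
    ∀ Q : Matrix (Fin K) (Fin N) ℝ, memQ Q →
      ∃ (Q2 : Matrix (Fin K) (Fin N) ℝ) (F2 : Matrix (Fin M) (Fin K) ℝ),
        memQ Q2 ∧ ¬ memQan Q2 ∧ memFin F2 ∧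
        F * Q = F2 * Q2 ∧ ¬ MEquiv F Q F2 Q2 ∧
        {k | isColE Q2 k} = {k | isColE Q k} \ {k₀} := by
  intro Q hQ
  obtain ⟨n, rfl⟩ : ∃ n, K = n + 1 := ⟨K - 1, by omega⟩
  have hn : 1 ≤ n := by omega
  set ε : ℝ := δ / (n + 1) with hεdef
  have hnpos : (0:ℝ) < n + 1 := by positivity
  have hε : 0 < ε := div_pos hδ0 hnpos
  have hnε : (n:ℝ) * ε < δ := by
    rw [hεdef, ← mul_div_assoc, div_lt_iff₀ hnpos]
    nlinarith
  set γ : ℝ := 1 - n * ε with hγdef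
  have hγpos : 0 < γ := by rw [hγdef]; nlinarith
  have hγlt1 : γ < 1 := by
    rw [hγdef]
    have : (0:ℝ) < (n:ℝ) * ε := by positivity
    linarith
  have hγne : γ ≠ 0 := ne_of_gt hγpos
  set β : ℝ := γ⁻¹ * ε with hβdef
  have hβpos : 0 < β := mul_pos (inv_pos.2 hγpos) hε
  set Q2 : Matrix (Fin (n+1)) (Fin N) ℝ :=
    (fun k i => if k = k₀ then γ * Q k₀ i else Q k i + ε * Q k₀ i) with hQ2def
  set F2 : Matrix (Fin M) (Fin (n+1)) ℝ :=
    (fun s k => if k = k₀ then γ⁻¹ * (F s k₀ - ε * ((∑ l, F s l) - F s k₀)) else F s k)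
      with hF2def
  have hQle1 : ∀ k i, Q k i ≤ 1 := by
    intro k i
    calc Q k i ≤ ∑ l, Q l i :=
          Finset.single_le_sum (fun l _ => hQ.1 l i) (Finset.mem_univ k)
      _ = 1 := hQ.2 i
  -- key alternative formula for F2
  have hkey : ∀ s, F2 s k₀ = F s k₀ + β * ((n+1) * F s k₀ - ∑ l, F s l) := by
    intro s
    rw [hF2def]
    simp only [if_pos rfl, eq_self_iff_true, if_true]
    rw [hβdef, hγdef]
    field_simp
    have h1 : (1:ℝ) - ε * n ≠ 0 := by rw [mul_comm]; exact hγne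
    field_simp
    ring
  have hF2off : ∀ s k, k ≠ k₀ → F2 s k = F s k := by
    intro s k hk; rw [hF2def]; simp [hk]
  -- affine independence of columns of F
  have affF : ∀ c : Fin (n+1) → ℝ, (∑ k, c k) = 0 →
      (∀ s, (∑ k, c k * F s k) = 0) → ∀ k, c k = 0 := by
    intro c hc0 hcF
    have hLI := hF.2 (by omega : 0 < n + 1)
    rw [Fintype.linearIndependent_iff] at hLI
    have hce : ∀ j : Fin n, (Fin.castLE (Nat.sub_le (n+1) 1) j : Fin (n+1)) = Fin.castSucc j :=
      fun j => rfl
    have hlast : (⟨n + 1 - 1, Nat.sub_lt (by omega) Nat.one_pos⟩ : Fin (n+1)) = Fin.last n := rfl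
    have hsum1 : ∑ j : Fin n, c (Fin.castSucc j) = - c (Fin.last n) := by
      have h := hc0
      rw [Fin.sum_univ_castSucc] at h
      linarith
    have key := hLI (fun j : Fin n => c (Fin.castSucc j)) ?_
    · intro k
      induction k using Fin.lastCases with
      | last =>
        have : ∀ j : Fin n, c (Fin.castSucc j) = 0 := fun j => key j
        have h := hc0
        rw [Fin.sum_univ_castSucc] at h
        simpa [this] using h
      | cast j => exact key j
    · funext s
      simp only [Finset.sum_apply, Pi.smul_apply, smul_eq_mul, Pi.zero_apply, hce, hlast]
      have h2 : ∑ j : Fin n, c (Fin.castSucc j) * F s (Fin.castSucc j)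
          = - (c (Fin.last n) * F s (Fin.last n)) := by
        have h := hcF s
        rw [Fin.sum_univ_castSucc] at h
        linarith
      calc ∑ j : Fin n, c (Fin.castSucc j) * (F s (Fin.castSucc j) - F s (Fin.last n))
          = (∑ j : Fin n, c (Fin.castSucc j) * F s (Fin.castSucc j))
            - (∑ j : Fin n, c (Fin.castSucc j)) * F s (Fin.last n) := by
            rw [Finset.sum_mul, ← Finset.sum_sub_distrib]
            exact Finset.sum_congr rfl (fun j _ => by ring)
        _ = 0 := by rw [hsum1, h2]; ring
  -- affine independence of columns of F2
  have affF2 : ∀ c : Fin (n+1) → ℝ, (∑ k, c k) = 0 →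
      (∀ s, (∑ k, c k * F2 s k) = 0) → ∀ k, c k = 0 := by
    intro c hc0 hcF2
    set c' : Fin (n+1) → ℝ :=
      fun k => c k + c k₀ * β * ((if k = k₀ then ((n:ℝ)+1) else 0) - 1) with hc'def
    have hite : ∀ x : ℝ, ∑ k : Fin (n+1), (if k = k₀ then ((n:ℝ)+1) else 0) * x
        = ((n:ℝ)+1) * x := by
      intro x
      simp [Finset.sum_ite_eq', ite_mul]
    have hc'0 : ∑ k, c' k = 0 := by
      rw [hc'def]
      rw [Finset.sum_add_distrib, hc0, zero_add, ← Finset.mul_sum, Finset.sum_sub_distrib]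
      have h1 : ∑ k : Fin (n+1), (if k = k₀ then ((n:ℝ)+1) else 0) = (n:ℝ)+1 := by
        simp [Finset.sum_ite_eq']
      rw [h1]
      simp [Finset.card_univ]
    have hF2eq : ∀ s k, F2 s k
        = F s k + (if k = k₀ then β * (((n:ℝ)+1) * F s k₀ - ∑ l, F s l) else 0) := by
      intro s k
      by_cases h : k = k₀
      · subst h; rw [if_pos rfl, hkey s]
      · rw [if_neg h, hF2off s k h, add_zero]
    have hite : ∀ f : Fin (n+1) → ℝ,
        ∑ k : Fin (n+1), (if k = k₀ then ((n:ℝ)+1) else 0) * f k = ((n:ℝ)+1) * f k₀ := by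
      intro f
      simp [ite_mul]
    have hc'F : ∀ s, (∑ k, c' k * F s k) = 0 := by
      intro s
      have hlhs : ∑ k, c' k * F s k
          = (∑ k, c k * F s k) + c k₀ * β * (((n:ℝ)+1) * F s k₀ - ∑ l, F s l) := by
        calc ∑ k, c' k * F s k
            = ∑ k, (c k * F s k
              + (c k₀ * β) * ((if k = k₀ then ((n:ℝ)+1) else 0) * F s k)
              - (c k₀ * β) * F s k) :=
              Finset.sum_congr rfl (fun k _ => by rw [hc'def]; ring)
          _ = (∑ k, c k * F s k)
              + (c k₀ * β) * (∑ k : Fin (n+1), (if k = k₀ then ((n:ℝ)+1) else 0) * F s k)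
              - (c k₀ * β) * ∑ l, F s l := by
              rw [Finset.sum_sub_distrib, Finset.sum_add_distrib, ← Finset.mul_sum,
                ← Finset.mul_sum]
          _ = _ := by rw [hite (fun k => F s k)]; ring
      have hrhs : ∑ k, c k * F2 s k
          = (∑ k, c k * F s k) + c k₀ * β * (((n:ℝ)+1) * F s k₀ - ∑ l, F s l) := by
        calc ∑ k, c k * F2 s k
            = ∑ k, (c k * F s k
              + (if k = k₀ then c k * (β * (((n:ℝ)+1) * F s k₀ - ∑ l, F s l)) else 0)) :=
              Finset.sum_congr rfl (fun k _ => by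
                rw [hF2eq s k, mul_add, mul_ite, mul_zero])
          _ = (∑ k, c k * F s k) + c k₀ * (β * (((n:ℝ)+1) * F s k₀ - ∑ l, F s l)) := by
              rw [Finset.sum_add_distrib, Finset.sum_ite_eq' Finset.univ k₀]
              simp
          _ = _ := by ring
      rw [hlhs, ← hrhs]
      exact hcF2 s
    have hc' := affF c' hc'0 hc'F
    have hck₀ : c k₀ = 0 := by
      have h := hc' k₀
      rw [hc'def] at h
      simp only [if_pos rfl] at h
      have h2 : c k₀ * (1 + β * n) = 0 := by push_cast at h ⊢; ring_nf at h ⊢; linarith [h]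
      have h3 : (0:ℝ) < 1 + β * n := by positivity
      exact (mul_eq_zero.1 h2).resolve_right (ne_of_gt h3)
    intro k
    have h := hc' k
    rw [hc'def] at h
    simpa [hck₀] using h
  -- Q2 has no e_{k₀} column
  have hQ2k₀ : ∀ i, ¬ (∀ l, Q2 l i = if l = k₀ then (1:ℝ) else 0) := by
    intro i hi
    have h1 := hi k₀
    rw [hQ2def] at h1
    simp only [if_pos rfl, if_true] at h1
    have h2 := hQle1 k₀ i
    have h3 := hQ.1 k₀ i
    nlinarith
  refine ⟨Q2, F2, ?_, ?_, ⟨?_, ?_⟩, ?_, ?_, ?_⟩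
  · -- memQ Q2
    constructor
    · intro k i
      simp only [hQ2def]
      by_cases h : k = k₀
      · rw [if_pos h]
        exact mul_nonneg (le_of_lt hγpos) (hQ.1 k₀ i)
      · rw [if_neg h]
        have := hQ.1 k i
        have := hQ.1 k₀ i
        nlinarith
    · intro i
      have hsplit : ∑ k, Q2 k i
          = Q2 k₀ i + ∑ k ∈ Finset.univ.erase k₀, Q2 k i :=
        (Finset.add_sum_erase _ (fun k => Q2 k i) (Finset.mem_univ k₀)).symm
      have herase : ∀ k ∈ Finset.univ.erase k₀, Q2 k i = Q k i + ε * Q k₀ i := by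
        intro k hk
        simp only [hQ2def]
        exact if_neg (Finset.mem_erase.1 hk).1
      have hcard : (Finset.univ.erase k₀).card = n := by
        rw [Finset.card_erase_of_mem (Finset.mem_univ k₀), Finset.card_univ,
          Fintype.card_fin]
        omega
      have hQer : ∑ k ∈ Finset.univ.erase k₀, Q k i = 1 - Q k₀ i := by
        have := Finset.add_sum_erase Finset.univ (fun k => Q k i) (Finset.mem_univ k₀)
        rw [hQ.2 i] at this
        linarith
      rw [hsplit, Finset.sum_congr rfl herase, Finset.sum_add_distrib,
        Finset.sum_const, hcard, hQer]
      have : Q2 k₀ i = γ * Q k₀ i := by simp only [hQ2def, if_true, ite_true]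
      rw [this, nsmul_eq_mul, hγdef]
      ring
  · -- ¬ memQan Q2
    rintro ⟨-, hall⟩
    obtain ⟨i, hi⟩ := hall k₀
    exact hQ2k₀ i hi
  · -- memF F2
    intro s k
    have hFb := hF.1 s
    by_cases h : k = k₀
    · subst h
      have heq : F2 s k = γ⁻¹ * (F s k - ε * ((∑ l, F s l) - F s k)) := by
        simp only [hF2def, if_true, ite_true]
      have hub : (∑ l, F s l) - F s k ≤ n := by
        have := Finset.add_sum_erase Finset.univ (fun l => F s l) (Finset.mem_univ k)
        have hcard : (Finset.univ.erase k).card = n := by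
          rw [Finset.card_erase_of_mem (Finset.mem_univ k), Finset.card_univ,
            Fintype.card_fin]
          omega
        have hb : ∑ l ∈ Finset.univ.erase k, F s l ≤ (Finset.univ.erase k).card • (1:ℝ) :=
          Finset.sum_le_card_nsmul _ _ 1 (fun l _ => (hFb l).2)
        rw [hcard, nsmul_eq_mul, mul_one] at hb
        linarith
      have hlb : 0 ≤ (∑ l, F s l) - F s k := by
        have := Finset.add_sum_erase Finset.univ (fun l => F s l) (Finset.mem_univ k)
        have hb : 0 ≤ ∑ l ∈ Finset.univ.erase k, F s l :=
          Finset.sum_nonneg (fun l _ => (hFb l).1)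
        linarith
      have hδlb := (hFk₀ s).1
      have hδub := (hFk₀ s).2
      have hinner0 : 0 ≤ F s k - ε * ((∑ l, F s l) - F s k) := by nlinarith
      have hinnerγ : F s k - ε * ((∑ l, F s l) - F s k) ≤ γ := by
        rw [hγdef]; nlinarith
      constructor
      · rw [heq]; positivity
      · rw [heq]
        have hinv : γ⁻¹ * γ = 1 := inv_mul_cancel₀ hγne
        have : γ⁻¹ * (F s k - ε * ((∑ l, F s l) - F s k)) ≤ γ⁻¹ * γ :=
          mul_le_mul_of_nonneg_left hinnerγ (le_of_lt (inv_pos.2 hγpos))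
        linarith
    · rw [hF2off s k h]
      exact hFb k
  · -- colDiffIndep F2
    intro hK'
    rw [Fintype.linearIndependent_iff]
    intro g hg
    set c : Fin (n+1) → ℝ := fun k =>
      (if h : (k:ℕ) < n then g ⟨(k:ℕ), h⟩ else 0)
        - (if k = Fin.last n then ∑ j : Fin n, g j else 0) with hcdef
    have hcs : ∀ j : Fin n, c (Fin.castSucc j) = g j := by
      intro j
      simp only [hcdef]
      have h1 : ((Fin.castSucc j : Fin (n+1)) : ℕ) < n := j.isLt
      have h2 : (Fin.castSucc j : Fin (n+1)) ≠ Fin.last n := by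
        intro h
        have := congrArg (fun x : Fin (n+1) => (x:ℕ)) h
        simp at this
        omega
      rw [dif_pos h1, if_neg h2, sub_zero]
      congr 1
    have hcl : c (Fin.last n) = - ∑ j : Fin n, g j := by
      simp [hcdef]
    have hc0 : ∑ k, c k = 0 := by
      rw [Fin.sum_univ_castSucc]
      rw [Finset.sum_congr rfl (fun j _ => hcs j), hcl]
      ring
    have hcF2 : ∀ s, (∑ k, c k * F2 s k) = 0 := by
      intro s
      have h0 := congrFun hg s
      simp only [Finset.sum_apply, Pi.smul_apply, smul_eq_mul, Pi.zero_apply] at h0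
      have h : ∑ j : Fin n, g j * (F2 s (Fin.castSucc j) - F2 s (Fin.last n)) = 0 := h0
      rw [Fin.sum_univ_castSucc]
      rw [Finset.sum_congr rfl (fun j _ => by rw [hcs j]), hcl]
      have hexp : ∑ j : Fin n, g j * (F2 s (Fin.castSucc j) - F2 s (Fin.last n))
          = (∑ j : Fin n, g j * F2 s (Fin.castSucc j))
            - (∑ j : Fin n, g j) * F2 s (Fin.last n) := by
        rw [Finset.sum_mul, ← Finset.sum_sub_distrib]
        exact Finset.sum_congr rfl (fun j _ => by ring)
      rw [hexp] at h
      linarith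
    have hc := affF2 c hc0 hcF2
    intro j
    rw [← hcs j]
    exact hc (Fin.castSucc j)
  · -- F * Q = F2 * Q2
    ext s i
    rw [Matrix.mul_apply, Matrix.mul_apply]
    have e1 : ∑ k, F s k * Q k i
        = F s k₀ * Q k₀ i + ∑ k ∈ Finset.univ.erase k₀, F s k * Q k i :=
      (Finset.add_sum_erase _ (fun k => F s k * Q k i) (Finset.mem_univ k₀)).symm
    have e2 : ∑ k, F2 s k * Q2 k i
        = F2 s k₀ * Q2 k₀ i + ∑ k ∈ Finset.univ.erase k₀, F2 s k * Q2 k i :=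
      (Finset.add_sum_erase _ (fun k => F2 s k * Q2 k i) (Finset.mem_univ k₀)).symm
    have e3 : ∀ k ∈ Finset.univ.erase k₀,
        F2 s k * Q2 k i = F s k * Q k i + (ε * Q k₀ i) * F s k := by
      intro k hk
      have hkne : k ≠ k₀ := (Finset.mem_erase.1 hk).1
      rw [hF2off s k hkne]
      have : Q2 k i = Q k i + ε * Q k₀ i := by
        simp only [hQ2def]
        exact if_neg hkne
      rw [this]
      ring
    have e4 : ∑ k ∈ Finset.univ.erase k₀, F s k = (∑ k, F s k) - F s k₀ := by
      have := Finset.add_sum_erase Finset.univ (fun k => F s k) (Finset.mem_univ k₀)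
      linarith
    have e5 : F2 s k₀ = γ⁻¹ * (F s k₀ - ε * ((∑ l, F s l) - F s k₀)) := by
      simp only [hF2def, if_true, ite_true]
    have e6 : Q2 k₀ i = γ * Q k₀ i := by
      simp only [hQ2def, if_true, ite_true]
    have key2 : ∀ a t q : ℝ, γ⁻¹ * (a - ε * (t - a)) * (γ * q)
        = a * q - (ε * q) * (t - a) := by
      intro a t q
      have hinv : γ⁻¹ * γ = 1 := inv_mul_cancel₀ hγne
      calc γ⁻¹ * (a - ε * (t - a)) * (γ * q)
          = (γ⁻¹ * γ) * ((a - ε * (t - a)) * q) := by ring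
        _ = a * q - (ε * q) * (t - a) := by rw [hinv]; ring
    rw [e1, e2, Finset.sum_congr rfl e3, Finset.sum_add_distrib, ← Finset.mul_sum, e4,
      e5, e6, key2]
    ring
  · -- ¬ MEquiv
    rintro ⟨π, hπ, hFe, hQe⟩
    set c : Fin (n+1) → ℝ := fun k =>
      (if k = π k₀ then (1:ℝ) else 0) - (if k = k₀ then (1:ℝ) else 0)
        - β * (((n:ℝ)+1) * (if k = k₀ then (1:ℝ) else 0) - 1) with hcdef
    have hc0 : ∑ k, c k = 0 := by
      simp only [hcdef]
      rw [Finset.sum_sub_distrib, Finset.sum_sub_distrib, ← Finset.mul_sum,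
        Finset.sum_sub_distrib]
      simp [Finset.sum_ite_eq', Finset.mul_sum, Finset.card_univ, mul_comm]
    have hcF : ∀ s, (∑ k, c k * F s k) = 0 := by
      intro s
      have hrel : F s (π k₀) = F s k₀ + β * (((n:ℝ)+1) * F s k₀ - ∑ l, F s l) := by
        rw [← hkey s, ← hFe k₀ s]
      have expand : ∑ k, c k * F s k
          = F s (π k₀) - F s k₀ - β * (((n:ℝ)+1) * F s k₀ - ∑ l, F s l) := by
        have : ∀ k, c k * F s k
            = (if k = π k₀ then F s k else 0) - (if k = k₀ then F s k else 0)
              - β * (((n:ℝ)+1) * (if k = k₀ then F s k else 0) - F s k) := by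
          intro k
          simp only [hcdef]
          split_ifs <;> ring
        rw [Finset.sum_congr rfl (fun k _ => this k)]
        rw [Finset.sum_sub_distrib, Finset.sum_sub_distrib, ← Finset.mul_sum,
          Finset.sum_sub_distrib, ← Finset.mul_sum]
        simp [Finset.sum_ite_eq']
      rw [expand, hrel]
      ring
    have hc := affF c hc0 hcF
    by_cases hpk : π k₀ = k₀
    · obtain ⟨k1, hk1⟩ : ∃ k1 : Fin (n+1), k1 ≠ k₀ := by
        have : Nontrivial (Fin (n+1)) := Fin.nontrivial_iff_two_le.mpr (by omega)
        exact exists_ne k₀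
      have := hc k1
      simp only [hcdef, hpk, if_neg hk1] at this
      nlinarith [hβpos, this]
    · have := hc (π k₀)
      simp only [hcdef, if_pos rfl, if_neg hpk, if_true, ite_true] at this
      nlinarith [hβpos, this]
  · -- set of anchor columns
    ext k
    simp only [Set.mem_setOf_eq, Set.mem_diff, Set.mem_singleton_iff]
    constructor
    · rintro ⟨i, hi⟩
      have hkk₀ : k ≠ k₀ := by
        intro h
        subst h
        exact hQ2k₀ i hi
      have hQk₀i : Q k₀ i = 0 := by
        have h1 := hi k₀
        simp only [hQ2def, if_true, ite_true] at h1
        rw [if_neg (Ne.symm hkk₀)] at h1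
        have := mul_eq_zero.1 h1
        tauto
      refine ⟨⟨i, fun l => ?_⟩, hkk₀⟩
      have h1 := hi l
      by_cases h : l = k₀
      · subst h
        rw [if_neg (Ne.symm hkk₀)] at h1 ⊢
        exact hQk₀i
      · simp only [hQ2def] at h1
        rw [if_neg h] at h1
        rw [hQk₀i, mul_zero, add_zero] at h1
        exact h1
    · rintro ⟨⟨i, hi⟩, hkk₀⟩
      have hQk₀i : Q k₀ i = 0 := by
        have h1 := hi k₀
        rwa [if_neg (Ne.symm hkk₀)] at h1
      refine ⟨i, fun l => ?_⟩
      simp only [hQ2def]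
      by_cases h : l = k₀
      · subst h
        rw [if_pos rfl, hQk₀i, mul_zero, if_neg (Ne.symm hkk₀)]
      · rw [if_neg h, hQk₀i, mul_zero, add_zero]
        exact hi l
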